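/- (Purification for pairs) Let G be an abelian group, A, B finite nonempty subsets and H < G a finite subgroup such that both (A,B) and (A,H) are critical. Then for every H-coset R with B ∩ R ≠ ∅, one has δ(A, B ∪ R) ≥ δ(A, B), i.e., |A| + |B ∪ R| - |A + (B ∪ R)| ≥ |A| + |B| - |A+B|. -/

import Mathlib

open Pointwise

namespace Stmt12

set_option linter.unusedSectionVars false
set_option maxHeartbeats 1000000

universe u

/-- Dyson transform chain: produces a "stuck" pair. -/
lemma aux {G : Type u} [AddCommGroup G] [DecidableEq G] :
    ∀ (n : ℕ) (A S : Finset G), S.card = n → A.Nonempty → S.Nonempty →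
    ∃ A₁ S₁ : Finset G, A ⊆ A₁ ∧ S₁ ⊆ S ∧ S₁.Nonempty ∧
      A₁ + S₁ ⊆ A + S ∧ A₁.card + S₁.card = A.card + S.card ∧
      (∀ a ∈ A₁, ∀ s ∈ S₁, ∀ s' ∈ S₁, a + s - s' ∈ A₁) := by
  intro n
  induction n using Nat.strong_induction_on with
  | _ n IH =>
    intro A S hn hA hS
    by_cases hstuck : ∀ a ∈ A, ∀ s ∈ S, ∀ s' ∈ S, a + s - s' ∈ A
    · exact ⟨A, S, Finset.Subset.refl _, Finset.Subset.refl _, hS, Finset.Subset.refl _, rfl,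
        hstuck⟩
    · push_neg at hstuck
      obtain ⟨a, ha, s, hs, s', hs', hout⟩ := hstuck
      set e : G := a - s' with he
      set A' : Finset G := A ∪ (e +ᵥ S) with hA'
      set S' : Finset G := S ∩ (-e +ᵥ A) with hS'
      have htr : Finset.addDysonETransform e (A, S) = (A', S') := rfl
      have hS'sub : S' ⊆ S := Finset.inter_subset_left
      have hsmem : s' ∈ S' := by
        rw [hS', Finset.mem_inter, Finset.mem_vadd_finset]
        exact ⟨hs', a, ha, by rw [vadd_eq_add, he]; abel⟩
      have hs'notmem : s ∉ S' := by
        rw [hS', Finset.mem_inter, Finset.mem_vadd_finset]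
        rintro ⟨-, b, hb, hbe⟩
        rw [vadd_eq_add, he] at hbe
        apply hout
        have hb' : a + s - s' = b := by
          rw [← hbe]; abel
        rwa [hb']
      have hcard : S'.card < n := by
        rw [← hn]
        exact Finset.card_lt_card ⟨hS'sub, fun hsub => hs'notmem (hsub hs)⟩
      obtain ⟨A₁, S₁, h1, h2, h3, h4, h5, h6⟩ :=
        IH S'.card hcard A' S' rfl (hA.mono Finset.subset_union_left) ⟨s', hsmem⟩
      refine ⟨A₁, S₁, fun y hy => h1 (Finset.mem_union_left _ hy), fun y hy => hS'sub (h2 hy),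
        h3, ?_, ?_, h6⟩
      · refine h4.trans ?_
        have := Finset.addDysonETransform.subset e (A, S)
        rwa [htr] at this
      · have := Finset.addDysonETransform.card e (A, S)
        rw [htr] at this
        simp only at this
        omega


variable {G : Type u} [AddCommGroup G] [DecidableEq G]

section Quot
variable (K : AddSubgroup G) (KF : Finset G) [DecidableEq (G ⧸ K)]

local notation "φ" => QuotientAddGroup.mk' K

lemma mem_KF (hKF : (KF : Set G) = (K : Set G)) {g : G} (hg : g ∈ K) : g ∈ KF := by
  have : g ∈ (KF : Set G) := hKF ▸ hg
  exact_mod_cast this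

lemma sub_mem_of_eq {y w : G} (h : (φ) y = (φ) w) : y - w ∈ K := by
  rw [QuotientAddGroup.mk'_eq_mk'] at h
  obtain ⟨z, hz, hzw⟩ := h
  have : y - w = -z := by rw [← hzw]; abel
  rw [this]
  exact neg_mem hz

lemma fiber_card_le (hKF : (KF : Set G) = (K : Set G)) (X : Finset G) (c : G ⧸ K) :
    (X.filter fun y => (φ) y = c).card ≤ KF.card := by
  rcases (X.filter fun y => (φ) y = c).eq_empty_or_nonempty with h | ⟨w, hw⟩
  · rw [h]; exact Nat.zero_le _
  · rw [Finset.mem_filter] at hw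
    apply Finset.card_le_card_of_injOn (fun y => y - w)
    · intro y hy
      rw [Finset.mem_coe, Finset.mem_filter] at hy
      exact mem_KF K KF hKF (sub_mem_of_eq K (hy.2.trans hw.2.symm))
    · intro y _ y' _ h
      simpa using sub_left_injective h

lemma fiber_card_ge (hKF : (KF : Set G) = (K : Set G)) (X : Finset G) (hper : ∀ g ∈ K, ∀ y ∈ X, g + y ∈ X) (c : G ⧸ K)
    (hc : c ∈ X.image (φ)) : KF.card ≤ (X.filter fun y => (φ) y = c).card := by
  obtain ⟨w, hw, hwc⟩ := Finset.mem_image.1 hc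
  apply Finset.card_le_card_of_injOn (fun g => g + w)
  · intro g hg
    have hgK : g ∈ K := by rw [← SetLike.mem_coe, ← hKF]; exact_mod_cast hg
    rw [Finset.mem_coe, Finset.mem_filter]
    refine ⟨hper g hgK w hw, ?_⟩
    rw [map_add, ← hwc]
    have : (φ) g = 0 := by
      rwa [← AddMonoidHom.mem_ker, QuotientAddGroup.ker_mk']
    rw [this, zero_add]
  · intro y _ y' _ h
    simpa using h

lemma card_eq_of_periodic (hKF : (KF : Set G) = (K : Set G)) (X : Finset G) (hper : ∀ g ∈ K, ∀ y ∈ X, g + y ∈ X) :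
    X.card = KF.card * (X.image (φ)).card := by
  rw [Finset.card_eq_sum_card_fiberwise (f := (φ)) (t := X.image (φ))
    (fun x hx => Finset.mem_image_of_mem _ hx)]
  rw [Finset.sum_congr rfl (fun c hc => le_antisymm (fiber_card_le K KF hKF X c)
    (fiber_card_ge K KF hKF X hper c hc))]
  rw [Finset.sum_const, smul_eq_mul, mul_comm]

lemma card_le_of_fibers (hKF : (KF : Set G) = (K : Set G)) (X : Finset G) :
    X.card ≤ KF.card * (X.image (φ)).card := by
  rw [Finset.card_eq_sum_card_fiberwise (f := (φ)) (t := X.image (φ))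
    (fun x hx => Finset.mem_image_of_mem _ hx)]
  calc ∑ c ∈ X.image (φ), (X.filter fun y => (φ) y = c).card
      ≤ ∑ _c ∈ X.image (φ), KF.card := Finset.sum_le_sum (fun c _ => fiber_card_le K KF hKF X c)
    _ = KF.card * (X.image (φ)).card := by rw [Finset.sum_const, smul_eq_mul, mul_comm]

end Quot

/-- The key lemma: if `(A,H)` is critical then for any nonempty `S` inside an
`H`-coset, `δ(A,S) ≤ δ(A,H)`. -/
lemma key : ∀ (n : ℕ) {G : Type u} [AddCommGroup G] [DecidableEq G]
    (H : AddSubgroup G) (HF : Finset G), (HF : Set G) = (H : Set G) → HF.card = n →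
    ∀ (A S : Finset G) (x : G), A.Nonempty → S.Nonempty →
    ((S : Set G) ⊆ x +ᵥ (H : Set G)) →
    (A + HF).card < A.card + HF.card →
    (A + HF).card + S.card ≤ (A + S).card + HF.card := by
  intro n
  induction n using Nat.strong_induction_on with
  | _ n IH =>
  intro G _ _ H HF hHF hn A S x hA hS hSx hcrit
  classical
  have hHFmem : ∀ g : G, g ∈ HF ↔ g ∈ H := by
    intro g
    constructor
    · intro hg
      have : g ∈ (HF : Set G) := hg
      rwa [hHF] at this
    · intro hg
      have : g ∈ (HF : Set G) := by rw [hHF]; exact hg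
      exact this
  obtain ⟨A₁, S₁, hAA₁, hS₁S, hS₁ne, hsum, hcards, hstuck⟩ := aux S.card A S rfl hA hS
  obtain ⟨s₀, hs₀⟩ := hS₁ne
  have hA₁W : A₁.card ≤ (A + S).card := by
    apply Finset.card_le_card_of_injOn (fun a => a + s₀)
    · intro a ha
      exact hsum (Finset.mem_add.2 ⟨a, ha, s₀, hs₀, rfl⟩)
    · intro a _ a' _ h
      simpa using h
  rcases eq_or_lt_of_le (Finset.one_le_card.mpr ⟨s₀, hs₀⟩ : 1 ≤ S₁.card) with h1 | hS₁2
  · -- |S₁| = 1 : conclude directly from criticality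
    omega
  -- now |S₁| ≥ 2, build the nontrivial subgroup K of periods of A₁ inside H
  obtain ⟨s₁, hs₁, hs₁0⟩ := Finset.exists_mem_ne hS₁2 s₀
  have hdiffH : ∀ s ∈ S, ∀ s' ∈ S, s - s' ∈ H := by
    intro s hs s' hs'
    obtain ⟨h1, hh1, hx1⟩ := Set.mem_vadd_set.1 (hSx (Finset.mem_coe.2 hs))
    obtain ⟨h2, hh2, hx2⟩ := Set.mem_vadd_set.1 (hSx (Finset.mem_coe.2 hs'))
    rw [vadd_eq_add] at hx1 hx2
    have : s - s' = h1 - h2 := by rw [← hx1, ← hx2]; abel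
    rw [this]
    exact H.sub_mem hh1 hh2
  have hmaps : ∀ g : G, (∀ a ∈ A₁, g + a ∈ A₁) → (∀ a ∈ A₁, -g + a ∈ A₁) := by
    intro g hg a ha
    have himg : A₁.image (fun b => g + b) = A₁ := by
      apply Finset.eq_of_subset_of_card_le
      · intro y hy
        obtain ⟨b, hb, rfl⟩ := Finset.mem_image.1 hy
        exact hg b hb
      · exact le_of_eq (Finset.card_image_of_injective _ (add_right_injective g)).symm
    rw [← himg] at ha
    obtain ⟨b, hb, hba⟩ := Finset.mem_image.1 ha
    have : -g + a = b := by rw [← hba]; abel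
    rwa [this]
  set K : AddSubgroup G :=
    { carrier := {g : G | g ∈ H ∧ ∀ a ∈ A₁, g + a ∈ A₁}
      zero_mem' := ⟨H.zero_mem, fun a ha => by rwa [zero_add]⟩
      add_mem' := by
        rintro g g' ⟨hgH, hg⟩ ⟨hg'H, hg'⟩
        refine ⟨H.add_mem hgH hg'H, fun a ha => ?_⟩
        have := hg _ (hg' a ha)
        rwa [← add_assoc] at this
      neg_mem' := by
        rintro g ⟨hgH, hg⟩
        exact ⟨H.neg_mem hgH, hmaps g hg⟩ } with hK
  have hKmem : ∀ g : G, g ∈ K ↔ (g ∈ H ∧ ∀ a ∈ A₁, g + a ∈ A₁) := fun g => Iff.rfl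
  have hs₁₀K : s₁ - s₀ ∈ K := by
    refine (hKmem _).2 ⟨hdiffH s₁ (hS₁S hs₁) s₀ (hS₁S hs₀), fun a ha => ?_⟩
    have := hstuck a ha s₁ hs₁ s₀ hs₀
    have heq : s₁ - s₀ + a = a + s₁ - s₀ := by abel
    rwa [heq]
  set KF : Finset G := HF.filter (fun g => g ∈ K) with hKFdef
  have hKFcoe : (KF : Set G) = (K : Set G) := by
    ext g
    simp only [hKFdef, Finset.coe_filter, Set.mem_setOf_eq, SetLike.mem_coe]
    constructor
    · rintro ⟨-, h⟩; exact h
    · intro h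
      exact ⟨(hHFmem g).2 ((hKmem g).1 h).1, h⟩
  have hKFmem : ∀ g : G, g ∈ KF ↔ g ∈ K := by
    intro g
    constructor
    · intro hg
      have : g ∈ (KF : Set G) := hg
      rwa [hKFcoe] at this
    · intro hg
      have : g ∈ (KF : Set G) := by rw [hKFcoe]; exact hg
      exact this
  have hk2 : 2 ≤ KF.card := by
    have : 1 < KF.card := Finset.one_lt_card.2
      ⟨s₁ - s₀, (hKFmem _).2 hs₁₀K, 0, (hKFmem _).2 K.zero_mem, sub_ne_zero.2 hs₁0⟩
    omega
  letI : DecidableEq (G ⧸ K) := Classical.decEq _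
  set φ : G →+ G ⧸ K := QuotientAddGroup.mk' K with hφ
  -- periodicity facts
  have hperHF : ∀ g ∈ K, ∀ y ∈ HF, g + y ∈ HF := by
    intro g hg y hy
    exact (hHFmem _).2 (H.add_mem ((hKmem g).1 hg).1 ((hHFmem y).1 hy))
  have hperAHF : ∀ g ∈ K, ∀ y ∈ A + HF, g + y ∈ A + HF := by
    intro g hg y hy
    obtain ⟨a, ha, t', ht', rfl⟩ := Finset.mem_add.1 hy
    exact Finset.mem_add.2 ⟨a, ha, g + t', hperHF g hg t' ht', by abel⟩
  have hperA₁s₀ : ∀ g ∈ K, ∀ y ∈ A₁ + ({s₀} : Finset G), g + y ∈ A₁ + ({s₀} : Finset G) := by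
    intro g hg y hy
    obtain ⟨a, ha, t', ht', rfl⟩ := Finset.mem_add.1 hy
    exact Finset.mem_add.2 ⟨g + a, ((hKmem g).1 hg).2 a ha, t', ht', by abel⟩
  -- quotient images
  set Abar : Finset (G ⧸ K) := A.image φ with hAbar
  set Sbar : Finset (G ⧸ K) := S.image φ with hSbar
  set HFbar : Finset (G ⧸ K) := HF.image φ with hHFbar
  set Hbar : AddSubgroup (G ⧸ K) := H.map φ with hHbar
  have hHbarcoe : (HFbar : Set (G ⧸ K)) = (Hbar : Set (G ⧸ K)) := by
    rw [hHFbar, Finset.coe_image, hHF, hHbar, AddSubgroup.coe_map]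
  have himgAHF : (A + HF).image φ = Abar + HFbar := Finset.image_add φ
  have himgW : (A + S).image φ = Abar + Sbar := Finset.image_add φ
  -- cardinality relations
  have hh : HF.card = KF.card * HFbar.card := card_eq_of_periodic K KF hKFcoe HF hperHF
  have hp : (A + HF).card = KF.card * (Abar + HFbar).card := by
    rw [← himgAHF]
    exact card_eq_of_periodic K KF hKFcoe (A + HF) hperAHF
  have haq : A.card ≤ KF.card * Abar.card := card_le_of_fibers K KF hKFcoe A
  have hcritq : (Abar + HFbar).card < Abar.card + HFbar.card := by
    have h1 : KF.card * (Abar + HFbar).card < KF.card * (Abar.card + HFbar.card) := by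
      rw [← hp, Nat.mul_add, ← hh]
      omega
    exact Nat.lt_of_mul_lt_mul_left h1
  have hHFbar_ne : 0 < HFbar.card := by
    rw [hHFbar]
    exact Finset.card_pos.2 ⟨φ 0, Finset.mem_image_of_mem _ ((hHFmem 0).2 H.zero_mem)⟩
  have hmeas : HFbar.card < n := by
    have : HFbar.card < 2 * HFbar.card := by omega
    calc HFbar.card < 2 * HFbar.card := this
      _ ≤ KF.card * HFbar.card := Nat.mul_le_mul_right _ hk2
      _ = n := by rw [← hh, hn]
  -- IH in the quotient
  have ihq : ∀ M' : Finset (G ⧸ K), M' ⊆ Sbar → M'.Nonempty →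
      (Abar + HFbar).card + M'.card ≤ (Abar + M').card + HFbar.card := by
    intro M' hM'S hM'ne
    refine IH HFbar.card hmeas Hbar HFbar hHbarcoe rfl Abar M' (φ x) ⟨φ hA.choose,
      Finset.mem_image_of_mem _ hA.choose_spec⟩ hM'ne ?_ hcritq
    intro c hc
    obtain ⟨s', hs', rfl⟩ := Finset.mem_image.1 (hM'S hc)
    obtain ⟨hel, hhel, hxel⟩ := Set.mem_vadd_set.1 (hSx (Finset.mem_coe.2 hs'))
    rw [vadd_eq_add] at hxel
    refine Set.mem_vadd_set.2 ⟨φ hel, ?_, ?_⟩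
    · exact AddSubgroup.mem_map.2 ⟨hel, hhel, rfl⟩
    · rw [vadd_eq_add, ← map_add, hxel]
  -- the full cosets
  set Full : Finset (G ⧸ K) := (A₁ + ({s₀} : Finset G)).image φ with hFulldef
  have hfullW : Full ⊆ (A + S).image φ := by
    apply Finset.image_subset_image
    refine Finset.Subset.trans (Finset.add_subset_add_left ?_) hsum
    exact Finset.singleton_subset_iff.2 hs₀
  have hAbarF : Abar.card ≤ Full.card := by
    apply Finset.card_le_card_of_injOn (fun c => c + φ s₀)
    · intro c hc
      obtain ⟨a, ha, rfl⟩ := Finset.mem_image.1 hc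
      refine Finset.mem_image.2 ⟨a + s₀, ?_, by rw [map_add]⟩
      exact Finset.mem_add.2 ⟨a, hAA₁ ha, s₀, Finset.mem_singleton_self _, rfl⟩
    · intro c _ c' _ h
      simpa using h
  have hple : (Abar + HFbar).card ≤ Full.card + HFbar.card := by
    have := hcritq
    omega
  set u : ℕ := Full.card + HFbar.card - (Abar + HFbar).card with hudef
  have hu : (Abar + HFbar).card + u = Full.card + HFbar.card := by omega
    -- Hall's theorem with deficiency u
  set t : {c // c ∈ Sbar} → Finset ((G ⧸ K) ⊕ ℕ) := fun m =>
    ((Abar.image (fun a' => a' + m.1)) \ Full).image Sum.inl ∪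
      (Finset.range u).image Sum.inr with htdef
  have hall : ∀ st : Finset {c // c ∈ Sbar}, st.card ≤ (st.biUnion t).card := by
    intro st
    rcases st.eq_empty_or_nonempty with rfl | ⟨m₀, hm₀⟩
    · simp
    set M' : Finset (G ⧸ K) := st.image (fun m => m.1) with hM'def
    have hM'card : M'.card = st.card :=
      Finset.card_image_of_injective _ Subtype.val_injective
    have hM'sub : M' ⊆ Sbar := by
      intro c hc
      obtain ⟨m, _, rfl⟩ := Finset.mem_image.1 hc
      exact m.2
    have hM'ne : M'.Nonempty := ⟨m₀.1, Finset.mem_image_of_mem _ hm₀⟩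
    have hIHq := ihq M' hM'sub hM'ne
    have hsub1 : ((Abar + M') \ Full).image Sum.inl ⊆ st.biUnion t := by
      intro z hz
      obtain ⟨c, hc, rfl⟩ := Finset.mem_image.1 hz
      have hc' := Finset.mem_sdiff.1 hc
      obtain ⟨a', ha', d, hd, had⟩ := Finset.mem_add.1 hc'.1
      obtain ⟨m, hm, hmd⟩ := Finset.mem_image.1 hd
      refine Finset.mem_biUnion.2 ⟨m, hm, Finset.mem_union_left _ ?_⟩
      apply Finset.mem_image_of_mem
      rw [Finset.mem_sdiff]
      exact ⟨Finset.mem_image.2 ⟨a', ha', by rw [hmd, had]⟩, hc'.2⟩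
    have hsub2 : (Finset.range u).image Sum.inr ⊆ st.biUnion t := fun z hz =>
      Finset.mem_biUnion.2 ⟨m₀, hm₀, Finset.mem_union_right _ hz⟩
    have hdisj : Disjoint (((Abar + M') \ Full).image Sum.inl)
        ((Finset.range u).image Sum.inr) := by
      rw [Finset.disjoint_left]
      rintro z hz1 hz2
      obtain ⟨c, -, rfl⟩ := Finset.mem_image.1 hz1
      obtain ⟨j, -, hj⟩ := Finset.mem_image.1 hz2
      exact Sum.inr_ne_inl hj
    have hcard1 : ((Abar + M') \ Full).card + u ≤ (st.biUnion t).card := by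
      have hun : (((Abar + M') \ Full).image Sum.inl ∪
          (Finset.range u).image Sum.inr).card = ((Abar + M') \ Full).card + u := by
        rw [Finset.card_union_of_disjoint hdisj,
          Finset.card_image_of_injective _ Sum.inl_injective,
          Finset.card_image_of_injective _ Sum.inr_injective, Finset.card_range]
      rw [← hun]
      exact Finset.card_le_card (Finset.union_subset hsub1 hsub2)
    have hsd : (Abar + M').card ≤ ((Abar + M') \ Full).card + Full.card :=
      Finset.card_le_card_sdiff_add_card
    omega
  obtain ⟨f, hfinj, hft⟩ := (Finset.all_card_le_biUnion_card_iff_exists_injective t).1 hall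
  set Match : Finset {c // c ∈ Sbar} := Finset.univ.filter (fun m => (f m).isLeft) with hMatchdef
  set NotMatch : Finset {c // c ∈ Sbar} := Finset.univ.filter (fun m => ¬(f m).isLeft)
    with hNotMatchdef
  set gl : {c // c ∈ Sbar} → G ⧸ K := fun m => ((f m).getLeft?).getD (φ 0) with hgldef
  have hgl : ∀ m ∈ Match, f m = Sum.inl (gl m) := by
    intro m hm
    have : (f m).isLeft := (Finset.mem_filter.1 hm).2
    rcases hfm : f m with c | j
    · simp [hgldef, hfm]
    · rw [hfm] at this; simp at this
  have hglmem : ∀ m ∈ Match, gl m ∈ (Abar.image (fun a' => a' + m.1)) \ Full := by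
    intro m hm
    have hf := hft m
    rw [htdef] at hf
    simp only at hf
    rcases Finset.mem_union.1 hf with hf1 | hf2
    · obtain ⟨c, hc, hic⟩ := Finset.mem_image.1 hf1
      have : c = gl m := by
        have := hgl m hm
        rw [this] at hic
        exact Sum.inl_injective hic
      rwa [← this]
    · obtain ⟨j, -, hj⟩ := Finset.mem_image.1 hf2
      rw [hgl m hm] at hj
      exact absurd hj (Sum.inr_ne_inl)
  -- fiber counting
  set fib : G ⧸ K → ℕ := fun c => ((A + S).filter fun y => φ y = c).card with hfibdef
  set T : G ⧸ K → ℕ := fun c => (S.filter fun y => φ y = c).card with hTdef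
  have hTsum : ∑ c ∈ Sbar, T c = S.card :=
    (Finset.card_eq_sum_card_fiberwise (fun y hy => Finset.mem_image_of_mem _ hy)).symm
  have hTle : ∀ c, T c ≤ KF.card := fun c => fiber_card_le K KF hKFcoe S c
  have hWsum : (A + S).card = ∑ c ∈ (A + S).image φ, fib c :=
    Finset.card_eq_sum_card_fiberwise (fun y hy => Finset.mem_image_of_mem _ hy)
  have hfib_full : ∀ c ∈ Full, KF.card ≤ fib c := by
    intro c hc
    have h1 := fiber_card_ge K KF hKFcoe (A₁ + ({s₀} : Finset G)) hperA₁s₀ c hc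
    refine h1.trans (Finset.card_le_card ?_)
    apply Finset.filter_subset_filter
    refine Finset.Subset.trans (Finset.add_subset_add_left ?_) hsum
    exact Finset.singleton_subset_iff.2 hs₀
  have hfib_pos : ∀ c ∈ (A + S).image φ, 1 ≤ fib c := by
    intro c hc
    obtain ⟨y, hy, hyc⟩ := Finset.mem_image.1 hc
    exact Finset.card_pos.2 ⟨y, Finset.mem_filter.2 ⟨hy, hyc⟩⟩
  have hfib_matched : ∀ m ∈ Match, T m.1 ≤ fib (gl m) := by
    intro m hm
    obtain ⟨ha', hnfull⟩ := Finset.mem_sdiff.1 (hglmem m hm)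
    obtain ⟨a', ha'A, ha'gl⟩ := Finset.mem_image.1 ha'
    obtain ⟨a, haA, rfl⟩ := Finset.mem_image.1 ha'A
    apply Finset.card_le_card_of_injOn (fun y => a + y)
    · intro y hy
      rw [Finset.mem_coe, Finset.mem_filter] at hy ⊢
      refine ⟨Finset.mem_add.2 ⟨a, haA, y, hy.1, rfl⟩, ?_⟩
      rw [map_add, hy.2, ha'gl]
    · intro y _ y' _ h
      simpa using h
  set MatchImg : Finset (G ⧸ K) := Match.image gl with hMIdef
  have hinjgl : ∀ m ∈ Match, ∀ m' ∈ Match, gl m = gl m' → m = m' := by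
    intro m hm m' hm' h
    apply hfinj
    rw [hgl m hm, hgl m' hm', h]
  have hMIcard : MatchImg.card = Match.card := Finset.card_image_of_injOn
    (fun m hm m' hm' h => hinjgl m hm m' hm' h)
  have hMIsub : MatchImg ⊆ ((A + S).image φ) \ Full := by
    intro z hz
    obtain ⟨m, hm, rfl⟩ := Finset.mem_image.1 hz
    obtain ⟨ha', hnfull⟩ := Finset.mem_sdiff.1 (hglmem m hm)
    obtain ⟨a', ha'A, ha'gl⟩ := Finset.mem_image.1 ha'
    rw [Finset.mem_sdiff]
    refine ⟨?_, hnfull⟩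
    rw [himgW, ← ha'gl]
    exact Finset.mem_add.2 ⟨a', ha'A, m.1, m.2, rfl⟩
  -- sum manipulations
  have hsplit1 : ∑ c ∈ ((A + S).image φ) \ Full, fib c + ∑ c ∈ Full, fib c
      = ∑ c ∈ (A + S).image φ, fib c := Finset.sum_sdiff hfullW
  have hsplit2 : ∑ c ∈ (((A + S).image φ) \ Full) \ MatchImg, fib c + ∑ c ∈ MatchImg, fib c
      = ∑ c ∈ ((A + S).image φ) \ Full, fib c := Finset.sum_sdiff hMIsub
  have hsumFull : KF.card * Full.card ≤ ∑ c ∈ Full, fib c := by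
    have h := Finset.card_nsmul_le_sum Full fib KF.card hfib_full
    rwa [smul_eq_mul, Nat.mul_comm] at h
  have hsumMI : ∑ m ∈ Match, T m.1 ≤ ∑ c ∈ MatchImg, fib c := by
    rw [hMIdef, Finset.sum_image hinjgl]
    exact Finset.sum_le_sum hfib_matched
  have hsumRest : ((((A + S).image φ) \ Full) \ MatchImg).card
      ≤ ∑ c ∈ (((A + S).image φ) \ Full) \ MatchImg, fib c := by
    have h := Finset.card_nsmul_le_sum ((((A + S).image φ) \ Full) \ MatchImg) fib 1
      (fun c hc => hfib_pos c (Finset.mem_sdiff.1 (Finset.mem_sdiff.1 hc).1).1)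
    rwa [smul_eq_mul, Nat.mul_one] at h
  have hcard_sd1 : ((A + S).image φ).card ≤ (((A + S).image φ) \ Full).card + Full.card :=
    Finset.card_le_card_sdiff_add_card
  have hcard_sd2 : (((A + S).image φ) \ Full).card
      ≤ ((((A + S).image φ) \ Full) \ MatchImg).card + MatchImg.card :=
    Finset.card_le_card_sdiff_add_card
  -- unmatched classes
  have hTsplit : ∑ m ∈ Match, T m.1 + ∑ m ∈ NotMatch, T m.1 = S.card := by
    rw [hMatchdef, hNotMatchdef, Finset.sum_filter_add_sum_filter_not, ← hTsum]
    exact Finset.sum_coe_sort Sbar T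
  have hNM_T : ∑ m ∈ NotMatch, T m.1 ≤ NotMatch.card * KF.card := by
    have h := Finset.sum_le_card_nsmul NotMatch (fun m => T m.1) KF.card
      (fun m _ => hTle m.1)
    rwa [smul_eq_mul] at h
  have hNMu : NotMatch.card ≤ u := by
    rw [← Finset.card_range u]
    apply Finset.card_le_card_of_injOn (fun m => ((f m).getRight?).getD 0) (t := Finset.range u)
    · intro m hm
      have hnl : ¬(f m).isLeft := (Finset.mem_filter.1 hm).2
      have hf := hft m
      rw [htdef] at hf
      simp only at hf
      rcases Finset.mem_union.1 hf with hf1 | hf2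
      · obtain ⟨c, -, hic⟩ := Finset.mem_image.1 hf1
        rw [← hic] at hnl
        simp at hnl
      · obtain ⟨j, hj, hji⟩ := Finset.mem_image.1 hf2
        beta_reduce
        rw [← hji]
        simpa using hj
    · intro m hm m' hm' h
      have h1 : ∀ mm, mm ∈ NotMatch → f mm = Sum.inr (((f mm).getRight?).getD 0) := by
        intro mm hmm
        have : ¬(f mm).isLeft := (Finset.mem_filter.1 hmm).2
        rcases hfm : f mm with c | j
        · rw [hfm] at this; simp at this
        · simp [hfm]
      have h' : ((f m).getRight?.getD 0) = ((f m').getRight?.getD 0) := h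
      apply hfinj
      rw [h1 m hm, h1 m' hm', h']
  have hMNM : Match.card + NotMatch.card = Sbar.card := by
    rw [hMatchdef, hNotMatchdef, Finset.card_filter_add_card_filter_not,
      Finset.card_univ, Fintype.card_coe]
  -- quotient bound on the full S
  have hWbar_ge : (Abar + HFbar).card + Sbar.card ≤ (Abar + Sbar).card + HFbar.card :=
    ihq Sbar (Finset.Subset.refl _) ⟨φ hS.choose, Finset.mem_image_of_mem _ hS.choose_spec⟩
  -- final arithmetic
  have e1 : ((A + S).image φ).card = (Abar + Sbar).card := by rw [himgW]
  have hwsum1 : KF.card * Full.card + ((((A + S).image φ) \ Full) \ MatchImg).card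
      + ∑ m ∈ Match, T m.1 ≤ (A + S).card := by
    have h3 : KF.card * Full.card + ((((A + S).image φ) \ Full) \ MatchImg).card
        + ∑ m ∈ Match, T m.1
        ≤ ∑ c ∈ Full, fib c + ∑ c ∈ (((A + S).image φ) \ Full) \ MatchImg, fib c
          + ∑ c ∈ MatchImg, fib c :=
      add_le_add (add_le_add hsumFull hsumRest) hsumMI
    refine h3.trans (le_of_eq ?_)
    rw [add_assoc, add_comm (∑ c ∈ Full, fib c), hsplit2, hsplit1, ← hWsum]
  -- cast everything to ℤ and finish
  have zWsum : (KF.card : ℤ) * Full.card + ((((A + S).image φ) \ Full) \ MatchImg).card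
      + ∑ m ∈ Match, T m.1 ≤ (A + S).card := by exact_mod_cast hwsum1
  have zRest : ((Abar + Sbar).card : ℤ) - Full.card - Match.card
      ≤ (((((A + S).image φ) \ Full) \ MatchImg).card : ℤ) := by
    have z1 : (((A + S).image φ).card : ℤ) ≤ ((((A + S).image φ) \ Full).card : ℤ)
        + Full.card := by exact_mod_cast hcard_sd1
    have z2 : ((((A + S).image φ) \ Full).card : ℤ)
        ≤ (((((A + S).image φ) \ Full) \ MatchImg).card : ℤ) + Match.card := by
      have := hcard_sd2
      rw [hMIcard] at this
      exact_mod_cast this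
    have z3 : (((A + S).image φ).card : ℤ) = ((Abar + Sbar).card : ℤ) := by
      exact_mod_cast e1
    linarith
  have zTM : ((S.card : ℤ)) - NotMatch.card * KF.card ≤ (∑ m ∈ Match, T m.1 : ℤ) := by
    have z1 : ((∑ m ∈ Match, T m.1 : ℕ) : ℤ) + ((∑ m ∈ NotMatch, T m.1 : ℕ) : ℤ)
        = S.card := by exact_mod_cast hTsplit
    have z2 : ((∑ m ∈ NotMatch, T m.1 : ℕ) : ℤ) ≤ (NotMatch.card : ℤ) * KF.card := by
      exact_mod_cast hNM_T
    linarith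
  have zWbar : ((Abar + HFbar).card : ℤ) + Sbar.card ≤ ((Abar + Sbar).card : ℤ)
      + HFbar.card := by exact_mod_cast hWbar_ge
  have zsig : (Match.card : ℤ) + NotMatch.card = Sbar.card := by exact_mod_cast hMNM
  have zu : ((Abar + HFbar).card : ℤ) + u = (Full.card : ℤ) + HFbar.card := by
    exact_mod_cast hu
  have zuk : (KF.card : ℤ) * ((Abar + HFbar).card + u)
      = KF.card * ((Full.card : ℤ) + HFbar.card) := by rw [zu]
  have zprod : (0 : ℤ) ≤ ((KF.card : ℤ) - 1) * ((u : ℤ) - NotMatch.card) := by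
    apply mul_nonneg
    · have : (2 : ℤ) ≤ KF.card := by exact_mod_cast hk2
      linarith
    · have : (NotMatch.card : ℤ) ≤ u := by exact_mod_cast hNMu
      linarith
  have zp : ((A + HF).card : ℤ) = (KF.card : ℤ) * (Abar + HFbar).card := by
    exact_mod_cast hp
  have zh : (HF.card : ℤ) = (KF.card : ℤ) * HFbar.card := by exact_mod_cast hh
  have ztarget : ((A + HF).card : ℤ) + S.card ≤ ((A + S).card : ℤ) + HF.card := by
    linarith [zWsum, zRest, zTM, zWbar, zsig, zuk, zprod, zp, zh]
  exact_mod_cast ztarget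
end Stmt12

theorem stmt_12 {G : Type*} [AddCommGroup G]
    (A B : Set G) (hAfin : A.Finite) (hBfin : B.Finite)
    (hA : A.Nonempty) (hB : B.Nonempty)
    (H : AddSubgroup G) (hHfin : (H : Set G).Finite)
    (hcritAB : (A + B).ncard < A.ncard + B.ncard)
    (hcritAH : (A + (H : Set G)).ncard < A.ncard + (H : Set G).ncard)
    (x : G) (R : Set G) (hR : R = x +ᵥ (H : Set G)) (hBR : (B ∩ R).Nonempty) :
    (A.ncard : ℤ) + (B ∪ R).ncard - (A + (B ∪ R)).ncard
      ≥ (A.ncard : ℤ) + B.ncard - (A + B).ncard := by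
  classical
  have hRfin : R.Finite := by rw [hR]; exact hHfin.vadd_set
  have hSfin : (B ∩ R).Finite := hBfin.subset Set.inter_subset_left
  set FA := hAfin.toFinset with hFA
  set FS := hSfin.toFinset with hFS
  set HFs := hHfin.toFinset with hHFs
  have hFAco : (FA : Set G) = A := hAfin.coe_toFinset
  have hFSco : (FS : Set G) = B ∩ R := hSfin.coe_toFinset
  have hHFco : (HFs : Set G) = (H : Set G) := hHfin.coe_toFinset
  -- Finset versions of cardinalities
  have hcA : A.ncard = FA.card := by rw [← hFAco, Set.ncard_coe_finset]
  have hcS : (B ∩ R).ncard = FS.card := by rw [← hFSco, Set.ncard_coe_finset]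
  have hcH : (H : Set G).ncard = HFs.card := by rw [← hHFco, Set.ncard_coe_finset]
  have hcAH : (A + (H : Set G)).ncard = (FA + HFs).card := by
    rw [← hFAco, ← hHFco, ← Finset.coe_add, Set.ncard_coe_finset]
  have hcAS : (A + (B ∩ R)).ncard = (FA + FS).card := by
    rw [← hFAco, ← hFSco, ← Finset.coe_add, Set.ncard_coe_finset]
  -- the key lemma
  have hANE : FA.Nonempty := by
    obtain ⟨a, ha⟩ := hA
    exact ⟨a, hAfin.mem_toFinset.2 ha⟩
  have hSNE : FS.Nonempty := by
    obtain ⟨a, ha⟩ := hBR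
    exact ⟨a, hSfin.mem_toFinset.2 ha⟩
  have hSsub : (FS : Set G) ⊆ x +ᵥ (H : Set G) := by
    rw [hFSco, ← hR]
    exact Set.inter_subset_right
  have hcritFin : (FA + HFs).card < FA.card + HFs.card := by
    rw [← hcAH, ← hcA, ← hcH]
    exact hcritAH
  have hkey := Stmt12.key HFs.card H HFs hHFco rfl FA FS x hANE hSNE hSsub hcritFin
  have zkey : ((A + (H : Set G)).ncard : ℤ) + (B ∩ R).ncard
      ≤ ((A + (B ∩ R)).ncard : ℤ) + (H : Set G).ncard := by
    rw [hcAH, hcS, hcAS, hcH]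
    exact_mod_cast hkey
  -- set identities
  have hAU : A + (B ∪ R) = (A + B) ∪ (A + R) := Set.add_union
  have hARfin : (A + R).Finite := hAfin.add hRfin
  have hABfin : (A + B).Finite := hAfin.add hBfin
  have hunion : ((A + B) ∪ (A + R)).ncard + ((A + B) ∩ (A + R)).ncard
      = (A + B).ncard + (A + R).ncard :=
    Set.ncard_union_add_ncard_inter _ _ hABfin hARfin
  have hint : (A + (B ∩ R)).ncard ≤ ((A + B) ∩ (A + R)).ncard := by
    refine Set.ncard_le_ncard ?_ (hABfin.inter_of_left _)
    refine Set.subset_inter (Set.add_subset_add_left Set.inter_subset_left)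
      (Set.add_subset_add_left Set.inter_subset_right)
  have hARtrans : A + R = x +ᵥ (A + (H : Set G)) := by
    rw [hR]
    ext z
    constructor
    · rintro ⟨a, ha, r, ⟨h', hh', rfl⟩, rfl⟩
      exact ⟨a + h', ⟨a, ha, h', hh', rfl⟩, by simp [vadd_eq_add]; abel⟩
    · rintro ⟨w, ⟨a, ha, h', hh', rfl⟩, rfl⟩
      exact ⟨a, ha, x + h', ⟨h', hh', rfl⟩, by simp [vadd_eq_add]; abel⟩
  have hAR : (A + R).ncard = (A + (H : Set G)).ncard := by
    rw [hARtrans, Set.ncard_vadd_set]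
  have hBU : (B ∪ R).ncard + (B ∩ R).ncard = B.ncard + R.ncard :=
    Set.ncard_union_add_ncard_inter _ _ hBfin hRfin
  have hRH : R.ncard = (H : Set G).ncard := by rw [hR, Set.ncard_vadd_set]
  have hW : (A + (B ∪ R)).ncard = ((A + B) ∪ (A + R)).ncard := by rw [hAU]
  -- final arithmetic
  have z1 : ((A + (B ∪ R)).ncard : ℤ) + ((A + B) ∩ (A + R)).ncard
      = ((A + B).ncard : ℤ) + (A + R).ncard := by
    rw [hW]; exact_mod_cast hunion
  have z2 : ((A + (B ∩ R)).ncard : ℤ) ≤ ((A + B) ∩ (A + R)).ncard := by exact_mod_cast hint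
  have z3 : ((A + R).ncard : ℤ) = (A + (H : Set G)).ncard := by exact_mod_cast hAR
  have z4 : ((B ∪ R).ncard : ℤ) + (B ∩ R).ncard = (B.ncard : ℤ) + R.ncard := by
    exact_mod_cast hBU
  have z5 : (R.ncard : ℤ) = (H : Set G).ncard := by exact_mod_cast hRH
  linarith [zkey, z1, z2, z3, z4, z5]
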